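/- Let A be definite and let x be a linear combination of all columns of A* with strictly positive coefficients, X = diag(x). Then X⁻¹AX is strictly visualized: (X⁻¹AX)_ij = 1 for every critical edge (i,j) and (X⁻¹AX)_ij < 1 for every non-critical edge (i,j). Moreover x is positive. -/

import Mathlib

open Finset

/-- Max-times matrix product: `(A ⊗ B) i j = max_k (A i k * B k j)`. -/
noncomputable def mProd {n : ℕ} (A B : Matrix (Fin n) (Fin n) NNReal) :
    Matrix (Fin n) (Fin n) NNReal :=
  fun i j => univ.sup fun k => A i k * B k j

/-- Max-algebraic matrix powers, `mPow A 0 = I`. -/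
noncomputable def mPow {n : ℕ} (A : Matrix (Fin n) (Fin n) NNReal) :
    ℕ → Matrix (Fin n) (Fin n) NNReal
  | 0 => fun i j => if i = j then 1 else 0
  | k + 1 => mProd (mPow A k) A

/-- Kleene star `A* = I ⊕ A ⊕ ... ⊕ A^{n-1}` in max algebra. -/
noncomputable def klStar {n : ℕ} (A : Matrix (Fin n) (Fin n) NNReal) :
    Matrix (Fin n) (Fin n) NNReal :=
  fun i j => (Finset.range n).sup fun k => mPow A k i j

/-- Partial "sums" `I ⊕ A ⊕ ... ⊕ A^m` of the Kleene star series. -/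
noncomputable def kPartial {n : ℕ} (A : Matrix (Fin n) (Fin n) NNReal) (m : ℕ) :
    Matrix (Fin n) (Fin n) NNReal :=
  fun i j => (Finset.range (m + 1)).sup fun k => mPow A k i j

/-- The weight of the cycle given by the list `l` (with wrap-around edge). -/
def cycleWeight {n : ℕ} (A : Matrix (Fin n) (Fin n) NNReal) (l : List (Fin n)) : NNReal :=
  ((l.zip (l.rotate 1)).map fun p => A p.1 p.2).prod

/-- The geometric mean of a cycle: `w(σ,A)^{1/k}`. -/
noncomputable def cycleMean {n : ℕ} (A : Matrix (Fin n) (Fin n) NNReal) (l : List (Fin n)) :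
    NNReal :=
  (cycleWeight A l) ^ ((l.length : ℝ)⁻¹)

/-- The maximum cycle geometric mean `λ(A)`. -/
noncomputable def maxCycleMean {n : ℕ} (A : Matrix (Fin n) (Fin n) NNReal) : NNReal :=
  sSup {x | ∃ l : List (Fin n), l ≠ [] ∧ x = cycleMean A l}

/-- `(i,j)` is a critical edge: it lies on a cycle attaining `λ(A)`. -/
def criticalEdge {n : ℕ} (A : Matrix (Fin n) (Fin n) NNReal) (i j : Fin n) : Prop :=
  ∃ l : List (Fin n), l ≠ [] ∧ cycleMean A l = maxCycleMean A ∧ (i, j) ∈ l.zip (l.rotate 1)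

/-- Max-algebraic matrix-vector product. -/
noncomputable def mVec {n : ℕ} (A : Matrix (Fin n) (Fin n) NNReal) (x : Fin n → NNReal) :
    Fin n → NNReal :=
  fun i => univ.sup fun j => A i j * x j

section WW
variable {n : ℕ} (A : Matrix (Fin n) (Fin n) NNReal)

def walkWeight (l : List (Fin n)) : NNReal :=
  ((l.zip l.tail).map fun p => A p.1 p.2).prod

@[simp] lemma ww_nil : walkWeight A [] = 1 := rfl
@[simp] lemma ww_single (a : Fin n) : walkWeight A [a] = 1 := rfl
@[simp] lemma ww_cons2 (a b : Fin n) (t : List (Fin n)) :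
    walkWeight A (a :: b :: t) = A a b * walkWeight A (b :: t) := by
  simp [walkWeight]

lemma ww_append_single (l : List (Fin n)) (hl : l ≠ []) (b : Fin n) :
    walkWeight A (l ++ [b]) = walkWeight A l * A (l.getLast hl) b := by
  induction l with
  | nil => simp at hl
  | cons a t ih =>
    cases t with
    | nil => simp [walkWeight]
    | cons c t' =>
      have := ih (by simp)
      simp only [List.cons_append, ww_cons2] at *
      rw [this]
      rw [show (a :: c :: t').getLast hl = (c :: t').getLast (by simp) from List.getLast_cons _]
      ring

lemma ww_split (xs ys : List (Fin n)) (v : Fin n) :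
    walkWeight A (xs ++ v :: ys) = walkWeight A (xs ++ [v]) * walkWeight A (v :: ys) := by
  induction xs with
  | nil => simp
  | cons a t ih =>
    cases t with
    | nil => simp [ww_cons2]
    | cons c t' =>
      simp only [List.cons_append, ww_cons2] at *
      rw [ih]; ring

lemma zip_rot_aux (l : List (Fin n)) (hl : l ≠ []) (c : Fin n) :
    l.zip (l.tail ++ [c]) = l.zip l.tail ++ [(l.getLast hl, c)] := by
  induction l with
  | nil => simp at hl
  | cons a t ih =>
    cases t with
    | nil => simp
    | cons b t' =>
      have := ih (by simp)
      simp only [List.tail_cons, List.cons_append, List.zip_cons_cons] at *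
      rw [this]
      rw [show (a :: b :: t').getLast hl = (b :: t').getLast (by simp) from List.getLast_cons _]


lemma cycleWeight_eq_walk (l : List (Fin n)) (hl : l ≠ []) :
    cycleWeight A l = walkWeight A l * A (l.getLast hl) (l.head hl) := by
  obtain ⟨a, t, rfl⟩ := List.exists_cons_of_ne_nil hl
  have hrot : (a :: t).rotate 1 = t ++ [a] := by
    rw [List.rotate_cons_succ, List.rotate_zero]
  unfold cycleWeight
  rw [hrot]
  have : (a :: t).zip (t ++ [a]) = (a :: t).zip (a :: t).tail ++ [((a :: t).getLast hl, a)] :=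
    zip_rot_aux (a :: t) hl a
  simp only [List.tail_cons] at this
  rw [this]
  simp [walkWeight, List.head_cons]

end WW

section MP
variable {n : ℕ} (A : Matrix (Fin n) (Fin n) NNReal)

lemma mPow_one (a b : Fin n) : mPow A 1 a b = A a b := by
  show (univ.sup fun k => (if a = k then (1:NNReal) else 0) * A k b) = A a b
  apply le_antisymm
  · exact Finset.sup_le fun k _ => by
      by_cases h : a = k
      · subst h; simp
      · simp [h]
  · calc A a b = (if a = a then (1:NNReal) else 0) * A a b := by simp
      _ ≤ _ := Finset.le_sup (f := fun k => (if a = k then (1:NNReal) else 0) * A k b)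
        (mem_univ a)

lemma mPow_concat (p q : ℕ) (a b c : Fin n) :
    mPow A p a c * mPow A q c b ≤ mPow A (p + q) a b := by
  induction q generalizing b with
  | zero =>
    by_cases h : c = b
    · subst h; simp [mPow]
    · simp [mPow, h]
  | succ q ih =>
    have hne : (univ : Finset (Fin n)).Nonempty := ⟨c, mem_univ c⟩
    obtain ⟨k0, -, hk0⟩ := Finset.exists_mem_eq_sup univ hne
      (fun k => mPow A q c k * A k b)
    show mPow A p a c * (univ.sup fun k => mPow A q c k * A k b) ≤ _
    rw [hk0]
    calc mPow A p a c * (mPow A q c k0 * A k0 b)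
        = (mPow A p a c * mPow A q c k0) * A k0 b := by ring
      _ ≤ mPow A (p + q) a k0 * A k0 b := mul_le_mul_left (ih k0) _
      _ ≤ _ := Finset.le_sup (f := fun k => mPow A (p + q) a k * A k b) (mem_univ k0)

lemma walk_le_mPow (l : List (Fin n)) (hl : l ≠ []) :
    walkWeight A l ≤ mPow A (l.length - 1) (l.head hl) (l.getLast hl) := by
  induction l with
  | nil => simp at hl
  | cons a t ih =>
    cases t with
    | nil => simp [mPow]
    | cons b t' =>
      have h1 := ih (by simp)
      simp only [List.head_cons]
      rw [ww_cons2]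
      calc A a b * walkWeight A (b :: t')
          ≤ A a b * mPow A ((b :: t').length - 1) b ((b :: t').getLast (by simp)) :=
            mul_le_mul_right h1 _
        _ = mPow A 1 a b * mPow A ((b :: t').length - 1) b ((b :: t').getLast (by simp)) := by
            rw [mPow_one]
        _ ≤ mPow A (1 + ((b :: t').length - 1)) a ((b :: t').getLast (by simp)) :=
            mPow_concat A 1 _ a _ b
        _ = mPow A ((a :: b :: t').length - 1) a ((a :: b :: t').getLast hl) := by
            have h2 : (a :: b :: t').getLast hl = (b :: t').getLast (by simp) :=
              List.getLast_cons _
            rw [h2]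
            have h3 : 1 + ((b :: t').length - 1) = (a :: b :: t').length - 1 := by
              simp; omega
            rw [h3]
  
lemma mPow_realize (m : ℕ) (a b : Fin n) (h : mPow A m a b ≠ 0) :
    ∃ l : List (Fin n), ∃ hl : l ≠ [], l.head hl = a ∧ l.getLast hl = b ∧
      l.length = m + 1 ∧ walkWeight A l = mPow A m a b := by
  induction m generalizing b with
  | zero =>
    have hab : a = b := by
      by_contra hab; simp [mPow, hab] at h
    subst hab
    exact ⟨[a], by simp, rfl, rfl, rfl, by simp [mPow]⟩
  | succ m ih =>
    have hne : (univ : Finset (Fin n)).Nonempty := ⟨a, mem_univ a⟩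
    obtain ⟨k0, -, hk0⟩ := Finset.exists_mem_eq_sup univ hne
      (fun k => mPow A m a k * A k b)
    have hval : mPow A (m + 1) a b = mPow A m a k0 * A k0 b := hk0
    have hmk : mPow A m a k0 ≠ 0 := by
      intro h0; rw [hval, h0, zero_mul] at h; exact h rfl
    obtain ⟨l, hl, hhead, hlast, hlen, hw⟩ := ih k0 hmk
    refine ⟨l ++ [b], by simp, ?_, ?_, ?_, ?_⟩
    · rw [List.head_append_of_ne_nil hl]; exact hhead
    · simp [List.getLast_append]
    · simp [hlen]
    · rw [ww_append_single A l hl, hw, hlast, hval]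
end MP

lemma dup_split {α : Type*} : ∀ (l : List α), ¬ l.Nodup →
    ∃ (v : α) (l₁ l₂ l₃ : List α), l = l₁ ++ v :: l₂ ++ v :: l₃ := by
  intro l
  induction l with
  | nil => intro h; exact absurd List.nodup_nil h
  | cons a t ih =>
    intro h
    by_cases ha : a ∈ t
    · obtain ⟨s, u, rfl⟩ := List.append_of_mem ha
      exact ⟨a, [], s, u, by simp only [List.nil_append, List.cons_append]⟩
    · have : ¬ t.Nodup := by
        intro hn; exact h (List.nodup_cons.mpr ⟨ha, hn⟩)
      obtain ⟨v, l₁, l₂, l₃, rfl⟩ := ih this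
      exact ⟨v, a :: l₁, l₂, l₃, by simp only [List.cons_append]⟩

section KL
variable {n : ℕ} (A : Matrix (Fin n) (Fin n) NNReal)
  (hcyc : ∀ l : List (Fin n), l ≠ [] → cycleWeight A l ≤ 1)

lemma head?_some_head {α : Type*} {l : List α} {a : α} (h : l.head? = some a) :
    ∃ hl : l ≠ [], l.head hl = a := by
  cases l with
  | nil => simp at h
  | cons x t => exact ⟨by simp, by simpa using h⟩

lemma getLast?_some_getLast {α : Type*} {l : List α} {a : α} (h : l.getLast? = some a) :
    ∃ hl : l ≠ [], l.getLast hl = a := by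
  have hl : l ≠ [] := by rintro rfl; simp at h
  refine ⟨hl, ?_⟩
  rw [List.getLast?_eq_getLast_of_ne_nil hl] at h
  exact Option.some_injective _ h

include hcyc in
lemma walk_le_klStar : ∀ (N : ℕ) (l : List (Fin n)) (a b : Fin n), l.length ≤ N →
    l.head? = some a → l.getLast? = some b → walkWeight A l ≤ klStar A a b := by
  intro N
  induction N with
  | zero =>
    intro l a b hlen hh _
    obtain ⟨hl, -⟩ := head?_some_head hh
    exact absurd (List.length_pos_iff.mpr hl) (by omega)
  | succ N ih =>
    intro l a b hlen hh hb
    obtain ⟨hl, hha⟩ := head?_some_head hh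
    obtain ⟨hl2, hlb⟩ := getLast?_some_getLast hb
    by_cases hsmall : l.length ≤ n
    · have h1 := walk_le_mPow A l hl
      rw [hha, hlb] at h1
      refine h1.trans ?_
      apply Finset.le_sup (f := fun k => mPow A k a b)
      rw [mem_range]
      have : 1 ≤ l.length := List.length_pos_iff.mpr hl
      omega
    · push_neg at hsmall
      have hnd : ¬ l.Nodup := by
        intro hnd
        have := hnd.length_le_card
        simp at this
        omega
      obtain ⟨v, l₁, l₂, l₃, rfl⟩ := dup_split _ hnd
      have hcycle : walkWeight A ((v :: l₂) ++ [v]) ≤ 1 := by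
        rw [ww_append_single A (v :: l₂) (by simp) v]
        have := cycleWeight_eq_walk A (v :: l₂) (by simp)
        simp only [List.head_cons] at this
        rw [← this]
        exact hcyc _ (by simp)
      have hsplit : walkWeight A (l₁ ++ v :: l₂ ++ v :: l₃)
          ≤ walkWeight A (l₁ ++ v :: l₃) := by
        have e1 : walkWeight A (l₁ ++ v :: (l₂ ++ v :: l₃))
            = walkWeight A (l₁ ++ [v]) * walkWeight A (v :: (l₂ ++ v :: l₃)) :=
          ww_split A l₁ _ v
        have e2 : walkWeight A (v :: (l₂ ++ v :: l₃))
            = walkWeight A ((v :: l₂) ++ [v]) * walkWeight A (v :: l₃) := by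
          have := ww_split A (v :: l₂) l₃ v
          simpa using this
        have e3 : walkWeight A (l₁ ++ v :: l₃) = walkWeight A (l₁ ++ [v]) * walkWeight A (v :: l₃) :=
          ww_split A l₁ l₃ v
        calc walkWeight A (l₁ ++ v :: l₂ ++ v :: l₃)
            = walkWeight A (l₁ ++ v :: (l₂ ++ v :: l₃)) := by
              simp only [List.cons_append, List.append_assoc]
          _
            = walkWeight A (l₁ ++ [v]) * (walkWeight A ((v :: l₂) ++ [v])
              * walkWeight A (v :: l₃)) := by rw [e1, e2]
          _ ≤ walkWeight A (l₁ ++ [v]) * (1 * walkWeight A (v :: l₃)) := by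
              exact mul_le_mul_right (mul_le_mul_left hcycle _) _
          _ = walkWeight A (l₁ ++ v :: l₃) := by rw [e3]; ring
      refine hsplit.trans (ih (l₁ ++ v :: l₃) a b ?_ ?_ ?_)
      · simp only [List.length_append, List.length_cons] at hlen ⊢
        omega
      · rw [← hh]
        cases l₁ <;> simp
      · rw [← hb]
        have h3 : (v :: l₃).getLast? ≠ none := by simp
        cases hgl : (v :: l₃).getLast? with
        | none => exact absurd hgl h3
        | some w =>
          have h5 : (v :: (l₂ ++ v :: l₃)).getLast? = some w := by
            have e5 : v :: (l₂ ++ v :: l₃) = (v :: l₂) ++ (v :: l₃) := by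
              simp only [List.cons_append]
            rw [e5, List.getLast?_append, hgl]
            rfl
          have e6 : l₁ ++ v :: l₂ ++ v :: l₃ = l₁ ++ (v :: (l₂ ++ v :: l₃)) := by
            simp only [List.cons_append, List.append_assoc]
          rw [e6, List.getLast?_append, List.getLast?_append, h5, hgl]
end KL

section Mean
variable {n : ℕ} (A : Matrix (Fin n) (Fin n) NNReal)

lemma len_ne_zero_real {l : List (Fin n)} (hl : l ≠ []) : (l.length : ℝ) ≠ 0 := by
  have := List.length_pos_iff.mpr hl
  positivity

lemma weight_rpow (l : List (Fin n)) (hl : l ≠ []) :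
    cycleWeight A l = (cycleMean A l) ^ ((l.length : ℝ)) := by
  rw [cycleMean, ← NNReal.rpow_mul, inv_mul_cancel₀ (len_ne_zero_real hl), NNReal.rpow_one]

lemma mean_of_weight_one {l : List (Fin n)} (hw : cycleWeight A l = 1) :
    cycleMean A l = 1 := by
  rw [cycleMean, hw, NNReal.one_rpow]

lemma zip_length (l : List (Fin n)) : (l.zip (l.rotate 1)).length = l.length := by
  simp [List.length_zip]

lemma mean_bddAbove : BddAbove {x | ∃ l : List (Fin n), l ≠ [] ∧ x = cycleMean A l} := by
  classical
  set M : NNReal := 1 + (univ : Finset (Fin n × Fin n)).sup (fun p => A p.1 p.2) with hM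
  have hM1 : (1 : NNReal) ≤ M := le_add_right le_rfl
  have hMA : ∀ i j, A i j ≤ M := fun i j =>
    le_add_left (Finset.le_sup (f := fun p : Fin n × Fin n => A p.1 p.2) (mem_univ (i, j)))
  refine ⟨M, fun x hx => ?_⟩
  obtain ⟨l, hl, rfl⟩ := hx
  have hw : cycleWeight A l ≤ M ^ l.length := by
    have := List.prod_le_pow_card ((l.zip (l.rotate 1)).map fun p => A p.1 p.2) M ?_
    · refine this.trans ?_
      rw [List.length_map, zip_length]
    · intro y hy
      simp only [List.mem_map] at hy
      obtain ⟨p, -, rfl⟩ := hy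
      exact hMA p.1 p.2
  calc cycleMean A l ≤ (M ^ l.length) ^ ((l.length : ℝ)⁻¹) :=
        NNReal.rpow_le_rpow hw (by positivity)
    _ = M := by
        rw [← NNReal.rpow_natCast M l.length, ← NNReal.rpow_mul,
          mul_inv_cancel₀ (len_ne_zero_real hl), NNReal.rpow_one]

lemma mean_le_max {l : List (Fin n)} (hl : l ≠ []) :
    cycleMean A l ≤ maxCycleMean A :=
  le_csSup (mean_bddAbove A) ⟨l, hl, rfl⟩

lemma weight_le_one (hdef : maxCycleMean A = 1) {l : List (Fin n)} (hl : l ≠ []) :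
    cycleWeight A l ≤ 1 := by
  have h1 : cycleMean A l ≤ 1 := hdef ▸ mean_le_max A hl
  calc cycleWeight A l = (cycleMean A l) ^ ((l.length : ℝ)) := weight_rpow A l hl
    _ ≤ (1 : NNReal) ^ ((l.length : ℝ)) := NNReal.rpow_le_rpow h1 (by positivity)
    _ = 1 := NNReal.one_rpow _

end Mean

section Cons
variable {n : ℕ} (A : Matrix (Fin n) (Fin n) NNReal)
  (hcyc : ∀ l : List (Fin n), l ≠ [] → cycleWeight A l ≤ 1)

include hcyc in
lemma mPow_le_klStar (m : ℕ) (a b : Fin n) : mPow A m a b ≤ klStar A a b := by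
  by_cases h0 : mPow A m a b = 0
  · simp [h0]
  obtain ⟨l, hl, hh, hg, hlen, hw⟩ := mPow_realize A m a b h0
  rw [← hw]
  exact walk_le_klStar A hcyc l.length l a b le_rfl
    (by rw [List.head?_eq_head hl, hh]) (by rw [List.getLast?_eq_getLast_of_ne_nil hl, hg])

include hcyc in
lemma closed_walk_weight_le_one (l : List (Fin n)) (hl : l ≠ [])
    (hcl : l.getLast hl = l.head hl) : walkWeight A l ≤ 1 := by
  rcases Nat.lt_or_ge l.length 2 with h2 | h2
  · obtain ⟨a, t, rfl⟩ := List.exists_cons_of_ne_nil hl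
    have : t = [] := by
      cases t with
      | nil => rfl
      | cons x s => simp at h2
    subst this; simp
  · have hd : l.dropLast ≠ [] := by
      have : l.dropLast.length = l.length - 1 := List.length_dropLast
      intro h; rw [h] at this; simp at this; omega
    have hdec : l.dropLast ++ [l.getLast hl] = l := List.dropLast_concat_getLast hl
    have hhead : l.dropLast.head hd = l.head hl := by
      have h1 : l.head? = l.dropLast.head? := by
        conv_lhs => rw [← hdec]
        rw [List.head?_append, List.head?_eq_head hd]
        rfl
      rw [List.head?_eq_head hl, List.head?_eq_head hd] at h1
      exact (Option.some_injective _ h1).symm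
    have hW : walkWeight A l = walkWeight A l.dropLast * A (l.dropLast.getLast hd) (l.getLast hl) := by
      conv_lhs => rw [← hdec]
      exact ww_append_single A l.dropLast hd _
    have hcw : cycleWeight A l.dropLast = walkWeight A l := by
      rw [cycleWeight_eq_walk A l.dropLast hd, hW, hhead, hcl]
    rw [← hcw]
    exact hcyc _ hd

include hcyc in
lemma klStar_diag (i : Fin n) : klStar A i i = 1 := by
  apply le_antisymm
  · apply Finset.sup_le
    intro k _
    by_cases h0 : mPow A k i i = 0
    · simp [h0]
    obtain ⟨l, hl, hh, hg, hlen, hw⟩ := mPow_realize A k i i h0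
    rw [← hw]
    exact closed_walk_weight_le_one A hcyc l hl (by rw [hh, hg])
  · calc (1 : NNReal) = mPow A 0 i i := by simp [mPow]
      _ ≤ _ := Finset.le_sup (f := fun k => mPow A k i i) (by simp [mem_range, i.pos])

lemma cycle_of_edge_walk (i j : Fin n) (l : List (Fin n)) (hl : l ≠ [])
    (hh : l.head hl = j) (hg : l.getLast hl = i) :
    ∃ cyc : List (Fin n), cyc ≠ [] ∧ cycleWeight A cyc = A i j * walkWeight A l ∧
      (i, j) ∈ cyc.zip (cyc.rotate 1) := by
  rcases Nat.lt_or_ge l.length 2 with h2 | h2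
  · obtain ⟨a, t, rfl⟩ := List.exists_cons_of_ne_nil hl
    have ht : t = [] := by
      cases t with
      | nil => rfl
      | cons x s => simp at h2
    subst ht
    simp only [List.head_cons] at hh
    simp only [List.getLast_singleton] at hg
    refine ⟨[a], by simp, ?_, ?_⟩
    · rw [← hh, ← hg]
      simp [cycleWeight, List.rotate_singleton, walkWeight]
    · rw [← hh, ← hg]
      simp [List.rotate_singleton]
  · have hd : l.dropLast ≠ [] := by
      have : l.dropLast.length = l.length - 1 := List.length_dropLast
      intro h; rw [h] at this; simp at this; omega
    have hdec : l.dropLast ++ [l.getLast hl] = l := List.dropLast_concat_getLast hl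
    have hhead : l.dropLast.head hd = j := by
      have h1 : l.head? = l.dropLast.head? := by
        conv_lhs => rw [← hdec]
        rw [List.head?_append, List.head?_eq_head hd]
        rfl
      rw [List.head?_eq_head hl, List.head?_eq_head hd] at h1
      rw [← hh]
      exact (Option.some_injective _ h1).symm
    obtain ⟨dh, dt, hdt⟩ := List.exists_cons_of_ne_nil hd
    have hdh : dh = j := by
      have h6 : l.dropLast.head? = some j := by rw [List.head?_eq_head hd, hhead]
      rw [hdt] at h6
      simpa using h6
    refine ⟨i :: l.dropLast, by simp, ?_, ?_⟩
    · have hcw : cycleWeight A (i :: l.dropLast)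
          = walkWeight A (i :: l.dropLast) * A ((i :: l.dropLast).getLast (by simp)) i := by
        have := cycleWeight_eq_walk A (i :: l.dropLast) (by simp)
        simpa using this
      have hlast : (i :: l.dropLast).getLast (by simp) = l.dropLast.getLast hd :=
        List.getLast_cons hd
      have hWc : walkWeight A (i :: l.dropLast) = A i j * walkWeight A l.dropLast := by
        rw [hdt, ww_cons2, hdh]
      have hW : walkWeight A l = walkWeight A l.dropLast * A (l.dropLast.getLast hd) i := by
        conv_lhs => rw [← hdec]
        rw [ww_append_single A l.dropLast hd _, hg]
      rw [hcw, hlast, hWc, hW]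
      ring
    · rw [hdt]
      rw [List.rotate_cons_succ, List.rotate_zero]
      simp only [List.cons_append, List.zip_cons_cons]
      rw [hdh]
      exact List.mem_cons_self

end Cons

lemma mem_zip_tail {α : Type*} : ∀ (l : List α) (i j : α), (i, j) ∈ l.zip l.tail →
    ∃ l₁ l₂, l = l₁ ++ i :: j :: l₂ := by
  intro l
  induction l with
  | nil => intro i j h; simp at h
  | cons a t ih =>
    intro i j h
    cases t with
    | nil => simp at h
    | cons b t' =>
      simp only [List.tail_cons, List.zip_cons_cons, List.mem_cons] at h
      rcases h with h | h
      · obtain ⟨rfl, rfl⟩ := Prod.mk.injEq .. ▸ Prod.ext_iff.mp h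
        exact ⟨[], t', by simp⟩
      · obtain ⟨l₁, l₂, he⟩ := ih i j h
        exact ⟨a :: l₁, l₂, by rw [List.cons_append, ← he]⟩

section Key
variable {n : ℕ} (A : Matrix (Fin n) (Fin n) NNReal)
  (hcyc : ∀ l : List (Fin n), l ≠ [] → cycleWeight A l ≤ 1)

include hcyc in
lemma edge_star_le (i j k : Fin n) : A i j * klStar A j k ≤ klStar A i k := by
  have hne : (range n).Nonempty := ⟨0, by simp [mem_range, i.pos]⟩
  obtain ⟨q0, -, hq0⟩ := Finset.exists_mem_eq_sup (range n) hne (fun q => mPow A q j k)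
  show A i j * ((range n).sup fun q => mPow A q j k) ≤ _
  rw [hq0, ← mPow_one A i j]
  exact (mPow_concat A 1 q0 i k j).trans (mPow_le_klStar A hcyc _ i k)

include hcyc in
lemma key_ge (i j : Fin n) (w : NNReal) (m : ℕ) (hw : w ≤ mPow A m j i)
    (h1 : A i j * w = 1) (k : Fin n) : klStar A i k ≤ A i j * klStar A j k := by
  have hne : (range n).Nonempty := ⟨0, by simp [mem_range, i.pos]⟩
  obtain ⟨q0, -, hq0⟩ := Finset.exists_mem_eq_sup (range n) hne (fun q => mPow A q i k)
  show ((range n).sup fun q => mPow A q i k) ≤ _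
  rw [hq0]
  calc mPow A q0 i k = (A i j * w) * mPow A q0 i k := by rw [h1, one_mul]
    _ = A i j * (w * mPow A q0 i k) := by ring
    _ ≤ A i j * (mPow A m j i * mPow A q0 i k) :=
        mul_le_mul_right (mul_le_mul_left hw _) _
    _ ≤ A i j * mPow A (m + q0) j k := mul_le_mul_right (mPow_concat A m q0 j k i) _
    _ ≤ A i j * klStar A j k := mul_le_mul_right (mPow_le_klStar A hcyc _ j k) _

lemma critical_extract (i j : Fin n) (hcrit : criticalEdge A i j)
    (hwt : ∀ l : List (Fin n), l ≠ [] → cycleMean A l = maxCycleMean A → cycleWeight A l = 1) :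
    ∃ (w : NNReal) (m : ℕ), w ≤ mPow A m j i ∧ A i j * w = 1 := by
  obtain ⟨l, hl, hmean, hmem⟩ := hcrit
  have hw1 : cycleWeight A l = 1 := hwt l hl hmean
  obtain ⟨a, t, rfl⟩ := List.exists_cons_of_ne_nil hl
  have hrot : (a :: t).rotate 1 = t ++ [a] := by
    rw [List.rotate_cons_succ, List.rotate_zero]
  rw [hrot] at hmem
  have hzr := zip_rot_aux (n := n) (a :: t) hl a
  simp only [List.tail_cons] at hzr
  rw [hzr, List.mem_append] at hmem
  rcases hmem with hmem | hmem
  · -- inner edge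
    obtain ⟨l₁, l₂, he⟩ := mem_zip_tail (a :: t) i j (by simpa using hmem)
    have hWL : walkWeight A (a :: t)
        = walkWeight A (l₁ ++ [i]) * (A i j * walkWeight A (j :: l₂)) := by
      rw [he, ww_split A l₁ (j :: l₂) i, ww_cons2]
    have hcwL : cycleWeight A (a :: t)
        = walkWeight A (a :: t) * A ((a :: t).getLast hl) a := by
      have := cycleWeight_eq_walk A (a :: t) hl
      simpa using this
    -- last of (j :: l₂) equals last of (a :: t)
    have e1 : (l₁ ++ i :: j :: l₂).getLast? = some ((a :: t).getLast hl) := by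
      rw [← he]; exact List.getLast?_eq_getLast_of_ne_nil hl
    have e2 : (i :: j :: l₂).getLast? = some ((j :: l₂).getLast (by simp)) := by
      rw [List.getLast?_eq_getLast_of_ne_nil (by simp : (i :: j :: l₂) ≠ [])]
      congr 1
    rw [List.getLast?_append, e2] at e1
    have hlast : (j :: l₂).getLast (by simp) = (a :: t).getLast hl := by
      have : (some ((j :: l₂).getLast (by simp))).or l₁.getLast?
          = some ((a :: t).getLast hl) := e1
      simpa [Option.or] using this
    -- head of (l₁ ++ [i]) equals a
    have f1 : (l₁ ++ [i]).head? = (l₁ ++ i :: j :: l₂).head? := by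
      simp [List.head?_append]
    have f2 : (l₁ ++ [i]).head? = some a := by
      rw [f1, ← he, List.head?_eq_head hl]
      simp
    obtain ⟨hne1, hh1⟩ := head?_some_head f2
    have glast : (l₁ ++ [i]).getLast hne1 = i := by simp [List.getLast_append]
    -- the three bounds
    have b1 : walkWeight A (j :: l₂)
        ≤ mPow A ((j :: l₂).length - 1) j ((a :: t).getLast hl) := by
      have := walk_le_mPow A (j :: l₂) (by simp)
      rw [hlast] at this
      simpa using this
    have b3 : walkWeight A (l₁ ++ [i])
        ≤ mPow A ((l₁ ++ [i]).length - 1) a i := by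
      have := walk_le_mPow A (l₁ ++ [i]) hne1
      rwa [hh1, glast] at this
    refine ⟨walkWeight A (j :: l₂) * A ((a :: t).getLast hl) a * walkWeight A (l₁ ++ [i]),
      ((j :: l₂).length - 1) + 1 + ((l₁ ++ [i]).length - 1), ?_, ?_⟩
    · calc walkWeight A (j :: l₂) * A ((a :: t).getLast hl) a * walkWeight A (l₁ ++ [i])
          ≤ mPow A ((j :: l₂).length - 1) j ((a :: t).getLast hl)
            * mPow A 1 ((a :: t).getLast hl) a
            * mPow A ((l₁ ++ [i]).length - 1) a i := by
            rw [mPow_one]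
            exact mul_le_mul (mul_le_mul b1 le_rfl (zero_le') (zero_le')) b3
              (zero_le') (zero_le')
        _ ≤ mPow A ((j :: l₂).length - 1 + 1) j a
            * mPow A ((l₁ ++ [i]).length - 1) a i :=
            mul_le_mul_left (mPow_concat A _ 1 j a _) _
        _ ≤ mPow A ((j :: l₂).length - 1 + 1 + ((l₁ ++ [i]).length - 1)) j i :=
            mPow_concat A _ _ j i a
    · rw [← hw1, hcwL, hWL]
      ring
  · -- wrap-around edge
    simp only [List.mem_singleton, Prod.mk.injEq] at hmem
    obtain ⟨hi, hj⟩ := hmem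
    refine ⟨walkWeight A (a :: t), (a :: t).length - 1, ?_, ?_⟩
    · have hthis := walk_le_mPow A (a :: t) hl
      have hhd : (a :: t).head hl = j := by rw [hj]; simp
      rw [hhd, hi.symm] at hthis
      exact hthis
    · have hcwL : cycleWeight A (a :: t)
          = walkWeight A (a :: t) * A ((a :: t).getLast hl) a := by
        have := cycleWeight_eq_walk A (a :: t) hl
        simpa using this
      rw [hi, hj, ← hw1, hcwL]
      ring
end Key


/-- for definite `A`, a positive linear combination `x` of all
columns of `A*` is positive and `X⁻¹AX` is strictly visualized. -/
theorem stmt_15 {n : ℕ} (A : Matrix (Fin n) (Fin n) NNReal)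
    (hdef : maxCycleMean A = 1)
    (c : Fin n → NNReal) (hc : ∀ k, 0 < c k)
    (x : Fin n → NNReal) (hx : ∀ i, x i = ∑ k, c k * klStar A i k) :
    (∀ i, 0 < x i) ∧
    (∀ i j, criticalEdge A i j → (x i)⁻¹ * A i j * x j = 1) ∧
    (∀ i j, ¬ criticalEdge A i j → (x i)⁻¹ * A i j * x j < 1) := by
  have hcyc : ∀ l : List (Fin n), l ≠ [] → cycleWeight A l ≤ 1 :=
    fun l hl => weight_le_one A hdef hl
  have hwt : ∀ l : List (Fin n), l ≠ [] → cycleMean A l = maxCycleMean A →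
      cycleWeight A l = 1 := by
    intro l hl hm
    rw [weight_rpow A l hl, hm, hdef, NNReal.one_rpow]
  have hpos : ∀ i, 0 < x i := by
    intro i
    have h1 : c i * klStar A i i ≤ x i := by
      rw [hx i]
      exact Finset.single_le_sum (f := fun k => c k * klStar A i k)
        (fun _ _ => zero_le') (mem_univ i)
    rw [klStar_diag A hcyc i, mul_one] at h1
    exact lt_of_lt_of_le (hc i) h1
  have hle : ∀ i j, A i j * x j ≤ x i := by
    intro i j
    rw [hx i, hx j, Finset.mul_sum]
    refine Finset.sum_le_sum fun k _ => ?_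
    calc A i j * (c k * klStar A j k) = c k * (A i j * klStar A j k) := by ring
      _ ≤ c k * klStar A i k := mul_le_mul_right (edge_star_le A hcyc i j k) _
  have hratio_le : ∀ i j, (x i)⁻¹ * A i j * x j ≤ 1 := by
    intro i j
    rw [mul_assoc]
    calc (x i)⁻¹ * (A i j * x j) ≤ (x i)⁻¹ * x i := mul_le_mul_right (hle i j) _
      _ = 1 := inv_mul_cancel₀ (hpos i).ne'
  refine ⟨hpos, ?_, ?_⟩
  · intro i j hcrit
    obtain ⟨w, m, hw, h1⟩ := critical_extract A i j hcrit hwt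
    have hge : x i ≤ A i j * x j := by
      rw [hx i, hx j, Finset.mul_sum]
      refine Finset.sum_le_sum fun k _ => ?_
      calc c k * klStar A i k ≤ c k * (A i j * klStar A j k) :=
            mul_le_mul_right (key_ge A hcyc i j w m hw h1 k) _
        _ = A i j * (c k * klStar A j k) := by ring
    have heq : A i j * x j = x i := le_antisymm (hle i j) hge
    rw [mul_assoc, heq, inv_mul_cancel₀ (hpos i).ne']
  · intro i j hncrit
    refine lt_of_le_of_ne (hratio_le i j) ?_
    intro h1
    apply hncrit
    -- from equality derive A i j * x j = x i
    have h2 : A i j * x j = x i := by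
      rw [mul_assoc] at h1
      exact mul_left_cancel₀ (inv_ne_zero (hpos i).ne')
        (h1.trans (inv_mul_cancel₀ (hpos i).ne').symm)
    have hsum : ∑ k, c k * (A i j * klStar A j k) = ∑ k, c k * klStar A i k := by
      have : ∑ k, c k * (A i j * klStar A j k) = A i j * x j := by
        rw [hx j, Finset.mul_sum]
        exact Finset.sum_congr rfl fun k _ => by ring
      rw [this, h2, hx i]
    have hterm : c i * (A i j * klStar A j i) = c i * klStar A i i := by
      by_contra hne
      have hlt : ∑ k, c k * (A i j * klStar A j k) < ∑ k, c k * klStar A i k := by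
        refine Finset.sum_lt_sum (fun k _ => mul_le_mul_right
          (edge_star_le A hcyc i j k) _) ⟨i, mem_univ i, ?_⟩
        exact lt_of_le_of_ne (mul_le_mul_right (edge_star_le A hcyc i j i) _) hne
      exact absurd hsum hlt.ne
    have h3 : A i j * klStar A j i = 1 := by
      have := mul_left_cancel₀ (hc i).ne' hterm
      rwa [klStar_diag A hcyc i] at this
    have hne : (range n).Nonempty := ⟨0, by simp [mem_range, i.pos]⟩
    obtain ⟨q0, -, hq0⟩ := Finset.exists_mem_eq_sup (range n) hne (fun q => mPow A q j i)
    have h4 : A i j * mPow A q0 j i = 1 := by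
      rw [← h3]
      congr 1
      exact hq0.symm
    have h5 : mPow A q0 j i ≠ 0 := by
      intro h0; rw [h0, mul_zero] at h4; exact one_ne_zero h4.symm
    obtain ⟨l, hl, hh, hg, hlen, hwalk⟩ := mPow_realize A q0 j i h5
    obtain ⟨cyc, hcne, hcw, hcmem⟩ := cycle_of_edge_walk A i j l hl hh hg
    refine ⟨cyc, hcne, ?_, hcmem⟩
    rw [hdef]
    apply mean_of_weight_one
    rw [hcw, hwalk, h4]
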